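/- Let p ≥ 1, let f : ℝ^p → ℝ be twice continuously differentiable, let ρ > 0, ε ≥ 0, and let x, ν ∈ ℝ^p. Suppose that for every u ∈ [0, 1] the Hessian matrix ∇²f(x + uν) can be written as ∇²f(x + uν) = Σ(u) + G(u), where Σ(u) and G(u) are p × p matrices satisfying νᵀ Σ(u) ν ≥ ρ ‖ν‖₂² and max_{j,l} |G(u)_{jl}| ≤ ε. Then ⟨∇f(x + ν) − ∇f(x), ν⟩ ≥ ρ ‖ν‖₂² − ε ‖ν‖₁². -/

import Mathlib

open scoped RealInnerProductSpace

/-- Deterministic core of the restricted strong convexity lemma: if along the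
  segment from `x` to `x+ν` the Hessian decomposes as `Σ(u) + G(u)` with
  `νᵀΣ(u)ν ≥ ρ‖ν‖₂²` and `‖G(u)‖_max ≤ ε`, then
  `⟨∇f(x+ν) − ∇f(x), ν⟩ ≥ ρ‖ν‖₂² − ε‖ν‖₁²`. -/
theorem restricted_strong_convexity_core (p : ℕ) (hp : 1 ≤ p)
    (f : EuclideanSpace ℝ (Fin p) → ℝ) (hf : ContDiff ℝ 2 f)
    (ρ ε : ℝ) (hρ : 0 < ρ) (hε : 0 ≤ ε)
    (x ν : EuclideanSpace ℝ (Fin p))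
    (S G : ℝ → Matrix (Fin p) (Fin p) ℝ)
    (hdecomp : ∀ u ∈ Set.Icc (0 : ℝ) 1, ∀ a b : EuclideanSpace ℝ (Fin p),
      iteratedFDeriv ℝ 2 f (x + u • ν) ![a, b] =
        ∑ j, ∑ l, a j * (S u j l + G u j l) * b l)
    (hS : ∀ u ∈ Set.Icc (0 : ℝ) 1,
      ρ * ∑ j, (ν j) ^ 2 ≤ ∑ j, ∑ l, ν j * S u j l * ν l)
    (hG : ∀ u ∈ Set.Icc (0 : ℝ) 1, ∀ j l, |G u j l| ≤ ε) :
    ρ * (∑ j, (ν j) ^ 2) - ε * (∑ j, |ν j|) ^ 2 ≤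
      ⟪gradient f (x + ν) - gradient f x, ν⟫ := by
  -- the derivative of `fderiv f` exists since `f` is `C²`
  have hf1 : ContDiff ℝ 1 (fderiv ℝ f) := ((contDiff_succ_iff_fderiv (n := 1)).1 (by norm_num at hf ⊢; exact hf)).2.2
  have hdiff : Differentiable ℝ (fderiv ℝ f) := hf1.differentiable one_ne_zero
  set φ : ℝ → ℝ := fun u => fderiv ℝ f (x + u • ν) ν with hφ
  set φ' : ℝ → ℝ := fun u => fderiv ℝ (fderiv ℝ f) (x + u • ν) ν ν with hφ'
  have hline : ∀ u : ℝ, HasDerivAt (fun u : ℝ => x + u • ν) ν u := by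
    intro u
    simpa using ((hasDerivAt_id u).smul_const ν).const_add x
  have hderiv : ∀ u : ℝ, HasDerivAt φ (φ' u) u := by
    intro u
    have h1 : HasDerivAt (fun u : ℝ => fderiv ℝ f (x + u • ν))
        (fderiv ℝ (fderiv ℝ f) (x + u • ν) ν) u :=
      (hdiff _).hasFDerivAt.comp_hasDerivAt u (hline u)
    simpa using h1.clm_apply (hasDerivAt_const u ν)
  -- Mean value theorem on [0,1]
  obtain ⟨c, hc, hceq⟩ := exists_hasDerivAt_eq_slope φ φ' one_pos
    (fun u _ => (hderiv u).continuousAt.continuousWithinAt)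
    (fun u _ => hderiv u)
  have hcI : c ∈ Set.Icc (0 : ℝ) 1 := ⟨hc.1.le, hc.2.le⟩
  -- identify the inner product with φ 1 - φ 0
  have hgrad : ∀ y : EuclideanSpace ℝ (Fin p), ⟪gradient f y, ν⟫ = fderiv ℝ f y ν := by
    intro y
    rw [gradient, InnerProductSpace.toDual_symm_apply]
  have hrhs : ⟪gradient f (x + ν) - gradient f x, ν⟫ = φ 1 - φ 0 := by
    rw [inner_sub_left, hgrad, hgrad, hφ]
    simp
  -- identify φ' c with the quadratic form
  have hquad : φ' c = ∑ j, ∑ l, ν j * (S c j l + G c j l) * ν l := by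
    have := hdecomp c hcI ν ν
    rw [iteratedFDeriv_two_apply] at this
    simpa [hφ'] using this
  have hslope : φ 1 - φ 0 = φ' c := by rw [hceq]; ring
  rw [hrhs, hslope, hquad]
  have hsplit : ∀ j l, ν j * (S c j l + G c j l) * ν l
      = ν j * S c j l * ν l + ν j * G c j l * ν l := by intro j l; ring
  simp only [hsplit, Finset.sum_add_distrib]
  have hGbound : -(ε * (∑ j, |ν j|) ^ 2) ≤ ∑ j, ∑ l, ν j * G c j l * ν l := by
    have : ∀ j l, -(|ν j| * ε * |ν l|) ≤ ν j * G c j l * ν l := by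
      intro j l
      have h1 : |ν j * G c j l * ν l| ≤ |ν j| * ε * |ν l| := by
        rw [abs_mul, abs_mul]
        exact mul_le_mul_of_nonneg_right
          (mul_le_mul_of_nonneg_left (hG c hcI j l) (abs_nonneg _)) (abs_nonneg _)
      linarith [neg_abs_le (ν j * G c j l * ν l), h1]
    have key : ∑ j, ∑ l, (|ν j| * ε * |ν l|) = ε * (∑ j, |ν j|) ^ 2 := by
      simp_rw [show ∀ j l : Fin p, |ν j| * ε * |ν l| = ε * (|ν j| * |ν l|) from
        fun j l => by ring, ← Finset.mul_sum]
      rw [← Finset.sum_mul, sq]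
    calc -(ε * (∑ j, |ν j|) ^ 2) = ∑ j, ∑ l, -(|ν j| * ε * |ν l|) := by
          simp only [Finset.sum_neg_distrib, key]
      _ ≤ ∑ j, ∑ l, ν j * G c j l * ν l := by
          apply Finset.sum_le_sum; intro j _
          exact Finset.sum_le_sum fun l _ => this j l
  have := hS c hcI
  linarith
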